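/- Let Θ_n(z) = ∑_{k=0}^n C(n,k) (2n−k)!/(2n)! (2z)^k, K ∈ ℂ^{(m−p)×p}, Z = [[0,−K*],[K,0]], and t ∈ ℝ. Then Θ_n(tZ)·[I;0] = [α_n(t²K*K); tK β_n(t²K*K)], where α_n(z) = ∑_{j=0}^{⌊n/2⌋} a_{2j} (−z)^j, β_n(z) = ∑_{j=0}^{⌊(n−1)/2⌋} a_{2j+1} (−z)^j, and a_k = C(n,k)(2n−k)!/(2n)! · 2^k. -/

import Mathlib

open Matrix Polynomial

lemma fromRows_add' {R m₁ m₂ n : Type*} [CommRing R] (A₁ B₁ : Matrix m₁ n R) (A₂ B₂ : Matrix m₂ n R) :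
    fromRows A₁ A₂ + fromRows B₁ B₂ = fromRows (A₁ + B₁) (A₂ + B₂) := by
  ext (i|i) j <;> simp

lemma fromRows_smul' {R m₁ m₂ n : Type*} [CommRing R] (c : R) (A₁ : Matrix m₁ n R) (A₂ : Matrix m₂ n R) :
    c • fromRows A₁ A₂ = fromRows (c • A₁) (c • A₂) := by
  ext (i|i) j <;> simp

lemma fromRows_sum' {R m₁ m₂ n ι : Type*} [CommRing R] (s : Finset ι) (f : ι → Matrix m₁ n R) (g : ι → Matrix m₂ n R) :
    ∑ i ∈ s, fromRows (f i) (g i) = fromRows (∑ i ∈ s, f i) (∑ i ∈ s, g i) := by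
  classical
  induction s using Finset.induction_on with
  | empty => ext (i|i) j <;> simp
  | insert _ _ h ih => simp [Finset.sum_insert h, ih, fromRows_add']

lemma sum_range_two_mul' {M : Type*} [AddCommMonoid M] (m : ℕ) (f : ℕ → M) :
    ∑ k ∈ Finset.range (2 * m), f k = ∑ j ∈ Finset.range m, (f (2 * j) + f (2 * j + 1)) := by
  induction m with
  | zero => simp
  | succ m ih =>
    rw [Nat.mul_succ, Finset.sum_range_succ, Finset.sum_range_succ, Finset.sum_range_succ, ih,
      add_assoc]

lemma pow_mul_fromRows {p q : ℕ} (K : Matrix (Fin q) (Fin p) ℂ) (t : ℂ) (k : ℕ) :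
    (t • (fromBlocks 0 (-Kᴴ) K 0 : Matrix (Fin p ⊕ Fin q) (Fin p ⊕ Fin q) ℂ)) ^ k *
      fromRows (1 : Matrix (Fin p) (Fin p) ℂ) (0 : Matrix (Fin q) (Fin p) ℂ) =
    if Even k then fromRows ((-(t ^ 2 • (Kᴴ * K))) ^ (k / 2)) 0
    else fromRows 0 (t • (K * (-(t ^ 2 • (Kᴴ * K))) ^ (k / 2))) := by
  induction k with
  | zero => simp
  | succ k ih =>
    rw [pow_succ', Matrix.mul_assoc, ih]
    by_cases hk : Even k
    · obtain ⟨j, rfl⟩ := hk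
      have h1 : ¬ Even (j + j + 1) := by simp [Nat.even_add_one]
      have h2 : (j + j + 1) / 2 = (j + j) / 2 := by omega
      rw [if_pos (by exact ⟨j, rfl⟩), if_neg h1, h2]
      rw [Matrix.smul_mul, fromBlocks_mul_fromRows]
      simp only [Matrix.zero_mul, Matrix.mul_zero, add_zero, zero_add]
      rw [fromRows_smul', smul_zero]
    · obtain ⟨j, rfl⟩ := Nat.not_even_iff_odd.mp hk
      have h1 : Even (2 * j + 1 + 1) := ⟨j + 1, by omega⟩
      have h2 : (2 * j + 1 + 1) / 2 = (2 * j + 1) / 2 + 1 := by omega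
      have h3 : (2 * j + 1) / 2 = j := by omega
      rw [if_neg hk, if_pos h1, h2, h3]
      rw [Matrix.smul_mul, fromBlocks_mul_fromRows]
      simp only [Matrix.zero_mul, Matrix.mul_zero, add_zero, zero_add]
      rw [fromRows_smul', smul_zero]
      rw [pow_succ' (-(t ^ 2 • (Kᴴ * K))) j]
      simp [Matrix.mul_smul, Matrix.smul_mul, smul_smul, Matrix.neg_mul, Matrix.mul_neg,
        Matrix.mul_assoc, pow_two, smul_neg]

/-- The coefficients `a_k = C(n,k) (2n-k)!/(2n)! 2^k`. -/
noncomputable def besselCoeff (n k : ℕ) : ℂ :=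
  (n.choose k : ℂ) * ((2 * n - k).factorial : ℂ) / ((2 * n).factorial : ℂ) * 2 ^ k

/-- The scaled Bessel polynomial `Θ_n(z) = ∑_{k=0}^n C(n,k) (2n-k)!/(2n)! (2z)^k`. -/
noncomputable def Theta (n : ℕ) : Polynomial ℂ :=
  ∑ k ∈ Finset.range (n + 1), Polynomial.C (besselCoeff n k) * X ^ k

/-- `α_n(z) = ∑_{j=0}^{⌊n/2⌋} a_{2j} (−z)^j`. -/
noncomputable def alphaPoly (n : ℕ) : Polynomial ℂ :=
  ∑ j ∈ Finset.range (n / 2 + 1), Polynomial.C (besselCoeff n (2 * j)) * (-X) ^ j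

/-- `β_n(z) = ∑_{j=0}^{⌊(n−1)/2⌋} a_{2j+1} (−z)^j`. -/
noncomputable def betaPoly (n : ℕ) : Polynomial ℂ :=
  ∑ j ∈ Finset.range ((n - 1) / 2 + 1), Polynomial.C (besselCoeff n (2 * j + 1)) * (-X) ^ j

theorem theta_block_formula {p q : ℕ} (n : ℕ) (K : Matrix (Fin q) (Fin p) ℂ) (t : ℝ)
    (Z : Matrix (Fin p ⊕ Fin q) (Fin p ⊕ Fin q) ℂ) (hZ : Z = fromBlocks 0 (-Kᴴ) K 0) :
    aeval ((t : ℂ) • Z) (Theta n) *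
        fromRows (1 : Matrix (Fin p) (Fin p) ℂ) (0 : Matrix (Fin q) (Fin p) ℂ) =
      fromRows (aeval (((t : ℂ)) ^ 2 • (Kᴴ * K)) (alphaPoly n))
        ((t : ℂ) • (K * aeval (((t : ℂ)) ^ 2 • (Kᴴ * K)) (betaPoly n))) := by
  subst hZ
  set s : ℂ := (t : ℂ) with hs
  set A : Matrix (Fin p) (Fin p) ℂ := s ^ 2 • (Kᴴ * K) with hA
  have hzero : ∀ k, n < k → besselCoeff n k = 0 := by
    intro k hk; simp [besselCoeff, Nat.choose_eq_zero_of_lt hk]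
  have halpha : aeval A (alphaPoly n) =
      ∑ j ∈ Finset.range (n / 2 + 1), besselCoeff n (2 * j) • (-A) ^ j := by
    rw [alphaPoly, map_sum]
    refine Finset.sum_congr rfl fun j _ => ?_
    rw [_root_.map_mul, aeval_C, map_pow, map_neg, aeval_X, ← Algebra.smul_def]
  have hbeta : aeval A (betaPoly n) =
      ∑ j ∈ Finset.range (n / 2 + 1), besselCoeff n (2 * j + 1) • (-A) ^ j := by
    rw [betaPoly, map_sum]
    rw [Finset.sum_subset (Finset.range_subset_range.mpr (by omega : (n-1)/2+1 ≤ n/2+1))]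
    · exact Finset.sum_congr rfl fun j _ => by
        rw [_root_.map_mul, aeval_C, map_pow, map_neg, aeval_X, ← Algebra.smul_def]
    · intro j hj hj2
      simp only [Finset.mem_range] at hj hj2
      simp [hzero (2*j+1) (by omega)]
  have hT : aeval (s • fromBlocks 0 (-Kᴴ) K (0 : Matrix (Fin q) (Fin q) ℂ)) (Theta n) *
        fromRows (1 : Matrix (Fin p) (Fin p) ℂ) (0 : Matrix (Fin q) (Fin p) ℂ)
      = ∑ k ∈ Finset.range (n + 1),
          besselCoeff n k • ((s • fromBlocks 0 (-Kᴴ) K 0) ^ k *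
            fromRows (1 : Matrix (Fin p) (Fin p) ℂ) (0 : Matrix (Fin q) (Fin p) ℂ)) := by
    rw [Theta, map_sum, Matrix.sum_mul]
    refine Finset.sum_congr rfl fun k _ => ?_
    rw [_root_.map_mul, aeval_C, map_pow, aeval_X, ← Algebra.smul_def, Matrix.smul_mul]
  rw [hT]
  rw [Finset.sum_subset (Finset.range_subset_range.mpr (by omega : n + 1 ≤ 2 * (n / 2 + 1)))
    (fun k _ hk => by
      rw [hzero k (by simpa using hk), zero_smul])]
  rw [sum_range_two_mul']
  have hstep : ∀ j, besselCoeff n (2*j) • ((s • fromBlocks 0 (-Kᴴ) K 0) ^ (2*j) *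
        fromRows (1 : Matrix (Fin p) (Fin p) ℂ) (0 : Matrix (Fin q) (Fin p) ℂ))
      + besselCoeff n (2*j+1) • ((s • fromBlocks 0 (-Kᴴ) K 0) ^ (2*j+1) *
        fromRows (1 : Matrix (Fin p) (Fin p) ℂ) (0 : Matrix (Fin q) (Fin p) ℂ))
      = fromRows (besselCoeff n (2*j) • (-A) ^ j)
          (besselCoeff n (2*j+1) • (s • (K * (-A) ^ j))) := by
    intro j
    rw [pow_mul_fromRows, pow_mul_fromRows, if_pos (even_two_mul j),
      if_neg (by simp [Nat.even_add_one, Nat.even_mul]),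
      (by omega : 2 * j / 2 = j), (by omega : (2 * j + 1) / 2 = j),
      fromRows_smul', fromRows_smul', smul_zero, smul_zero, fromRows_add', add_zero, zero_add]
  rw [Finset.sum_congr rfl (fun j _ => hstep j), fromRows_sum', halpha, hbeta]
  have hfin : s • (K * ∑ j ∈ Finset.range (n / 2 + 1), besselCoeff n (2 * j + 1) • (-A) ^ j)
      = ∑ j ∈ Finset.range (n / 2 + 1), besselCoeff n (2 * j + 1) • s • (K * (-A) ^ j) := by
    rw [Matrix.mul_sum, Finset.smul_sum]
    exact Finset.sum_congr rfl fun j _ => by rw [Matrix.mul_smul, smul_comm]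
  rw [hfin]
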